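/- Let m and k be positive integers with gcd(k, m) = 1, let K = F_{2^m}, let σ : K → K be σ(x) = x^{2^k}, and let α ∈ K be such that the polynomial X^{σ+1} + X + α has no root in K. Then the function F_{α,σ} : K × K → K × K defined by F_{α,σ}(x,y) = (x^{σ+1} + x y^σ + α y^{σ+1}, x^{σ²+1} + α x^{σ²} y + (1+α^σ) x y^{σ²} + α y^{σ²+1}) is APN. -/

import Mathlib

/-- A function `F : V → V` on an `𝔽₂`-vector space is almost perfect nonlinear (APN)
if for every `a ≠ 0` and every `b`, the equation `F (x + a) + F x = b` has at most
two solutions. -/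
def IsAPN {V : Type*} [AddCommGroup V] (F : V → V) : Prop :=
  ∀ a : V, a ≠ 0 → ∀ b : V, Set.ncard {x : V | F (x + a) + F x = b} ≤ 2

private lemma aux_bezout (m k : ℕ) (hm : 0 < m) (hk : 0 < k) (h : Nat.gcd k m = 1) :
    ∃ r s : ℕ, k * r = m * s + 1 := by
  rcases Nat.lt_or_ge m 2 with hm2 | hm2
  · have hm1 : m = 1 := by omega
    subst hm1
    exact ⟨1, k - 1, by omega⟩
  · obtain ⟨r, -, hr⟩ := Nat.exists_mul_mod_eq_one_of_coprime h hm2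
    refine ⟨r, k * r / m, ?_⟩
    have h1 := Nat.div_add_mod (k * r) m
    rw [hr] at h1
    exact h1.symm

private lemma aux_card (m : ℕ) (hm : 0 < m) (z : GaloisField 2 m) : z ^ 2 ^ m = z := by
  haveI : Fintype (GaloisField 2 m) := Fintype.ofFinite _
  have h1 : Fintype.card (GaloisField 2 m) = 2 ^ m := by
    rw [← Nat.card_eq_fintype_card]
    exact GaloisField.card 2 m hm.ne'
  rw [← h1]
  exact FiniteField.pow_card z

private lemma aux_sqrt (m : ℕ) (hm : 0 < m) (z : GaloisField 2 m) :
    ∃ w : GaloisField 2 m, w ^ 2 = z := by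
  refine ⟨z ^ 2 ^ (m - 1), ?_⟩
  rw [← pow_mul]
  have h1 : 2 ^ (m - 1) * 2 = 2 ^ m := by
    rw [← pow_succ]
    congr 1
    omega
  rw [h1]
  exact aux_card m hm z

private lemma aux_fix (m k : ℕ) (hm : 0 < m) (hk : 0 < k) (h : Nat.gcd k m = 1)
    (z : GaloisField 2 m) (hz : z ^ 2 ^ k = z) : z = 0 ∨ z = 1 := by
  have iter : ∀ c : ℕ, z ^ 2 ^ c = z → ∀ j : ℕ, z ^ 2 ^ (c * j) = z := by
    intro c hc j
    induction j with
    | zero => simp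
    | succ n ih =>
        rw [Nat.mul_succ, pow_add, pow_mul, ih, hc]
  obtain ⟨r, s, hrs⟩ := aux_bezout m k hm hk h
  have h1 : z ^ 2 ^ (k * r) = z := iter k hz r
  have h2 : z ^ 2 ^ (m * s) = z := iter m (aux_card m hm z) s
  rw [hrs, pow_succ, pow_mul, h2] at h1
  have h3 : z * (z - 1) = 0 := by linear_combination h1
  rcases mul_eq_zero.mp h3 with h4 | h4
  · exact Or.inl h4
  · exact Or.inr (by linear_combination h4)

private lemma aux_Pne (m k : ℕ) (α : GaloisField 2 m)
    (hα : ∀ x : GaloisField 2 m, x ^ (2 ^ k + 1) + x + α ≠ 0)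
    (x y : GaloisField 2 m) (hxy : ¬(x = 0 ∧ y = 0)) :
    x * x ^ 2 ^ k + x * y ^ 2 ^ k + α * (y * y ^ 2 ^ k) ≠ 0 := by
  by_cases hy : y = 0
  · subst hy
    have hx : x ≠ 0 := fun h' => hxy ⟨h', rfl⟩
    rw [zero_pow (by positivity : (2 : ℕ) ^ k ≠ 0)]
    intro h0
    exact mul_ne_zero hx (pow_ne_zero (2 ^ k) hx) (by linear_combination h0)
  · intro h0
    have hyq : y ^ 2 ^ k ≠ 0 := pow_ne_zero _ hy
    apply hα (x / y)
    have hE : (x / y) ^ (2 ^ k + 1) + x / y + α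
        = (x * x ^ 2 ^ k + x * y ^ 2 ^ k + α * (y * y ^ 2 ^ k)) / (y ^ 2 ^ k * y) := by
      rw [pow_succ, div_pow]
      field_simp
    rw [hE, h0, zero_div]

private lemma aux_alg1 {K : Type*} [CommRing K] (S S1 S2 T T1 T2 P P1 P2 R R1 N c d : K)
    (h2 : (2 : K) = 0)
    (hi : S * P1 + S1 * P + T1 * R = 0)
    (hii : S1 * P2 + S2 * P1 + T2 * R1 = 0)
    (hiii : P2 * (S * R) + P2 * (T * (c * P1)) + P * (S2 * R) + P * (T2 * N) = 0)
    (hN : P1 * N = d * (P * P2) + R1 * R) :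
    P2 * (R * R * T1 + c * (P1 * (P1 * T)) + d * (P * (P * T2))) = 0 := by
  linear_combination (P2*R) * hi + (P*R) * hii + (P1) * hiii + (P*T2) * hN + (-N*P*P1*T2 - P*P1*R*S2 - P*P2*R*S1 + P ^ 2*P2*T2*d - P1*P2*R*S) * h2

private lemma aux_alg2 {K : Type*} [CommRing K] (P P1 R T T1 T2 c d s u : K)
    (h2 : (2 : K) = 0)
    (ha : s ^ 2 * T = c * T1)
    (hb : u ^ 2 * T1 = d * T2) :
    T * (T1 * ((P * (u * s) + R * s + c * P1) * (P * (u * s) + R * s + c * P1)))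
      = c * (T1 * (R * R * T1 + c * (P1 * (P1 * T)) + d * (P * (P * T2)))) := by
  linear_combination (P ^ 2*T1*u ^ 2 + R ^ 2*T1) * ha + (P ^ 2*T1*c) * hb + (P*P1*T*T1*c*s*u + P*R*T*T1*s ^ 2*u + P1*R*T*T1*c*s) * h2

set_option maxHeartbeats 2000000 in
private lemma aux_ker (m k : ℕ) (hm : 0 < m) (hk : 0 < k) (h : Nat.gcd k m = 1)
    (α : GaloisField 2 m)
    (hα : ∀ x : GaloisField 2 m, x ^ (2 ^ k + 1) + x + α ≠ 0)
    (a b x y : GaloisField 2 m) (hab : ¬(a = 0 ∧ b = 0))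
    (e1 : (a*(x ^ 2 ^ k) + a*(y ^ 2 ^ k) + (a ^ 2 ^ k)*x + b*α*(y ^ 2 ^ k) + (b ^ 2 ^ k)*α*y + (b ^ 2 ^ k)*x) = 0)
    (e2 : (a*(α ^ 2 ^ k)*((y ^ 2 ^ k) ^ 2 ^ k) + a*((x ^ 2 ^ k) ^ 2 ^ k) + a*((y ^ 2 ^ k) ^ 2 ^ k) + ((a ^ 2 ^ k) ^ 2 ^ k)*α*y + ((a ^ 2 ^ k) ^ 2 ^ k)*x + b*α*((x ^ 2 ^ k) ^ 2 ^ k) + b*α*((y ^ 2 ^ k) ^ 2 ^ k) + ((b ^ 2 ^ k) ^ 2 ^ k)*α*y + ((b ^ 2 ^ k) ^ 2 ^ k)*(α ^ 2 ^ k)*x + ((b ^ 2 ^ k) ^ 2 ^ k)*x) = 0) :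
    (x = 0 ∧ y = 0) ∨ (x = a ∧ y = b) := by
  have h2 : (2 : GaloisField 2 m) = 0 := by
    exact CharTwo.two_eq_zero
  have hπ : ¬(a*(a ^ 2 ^ k) + a*(b ^ 2 ^ k) + b*(b ^ 2 ^ k)*α = 0) := by
    intro h0
    exact aux_Pne m k α hα a b hab (by linear_combination h0)
  have hp1 : (a*(a ^ 2 ^ k) + a*(b ^ 2 ^ k) + b*(b ^ 2 ^ k)*α) ^ 2 ^ k = (a ^ 2 ^ k)*((a ^ 2 ^ k) ^ 2 ^ k) + (a ^ 2 ^ k)*((b ^ 2 ^ k) ^ 2 ^ k) + (b ^ 2 ^ k)*((b ^ 2 ^ k) ^ 2 ^ k)*(α ^ 2 ^ k) := by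
    simp only [add_pow_char_pow, mul_pow]
    all_goals ring
  have hp2 : ((a ^ 2 ^ k)*((a ^ 2 ^ k) ^ 2 ^ k) + (a ^ 2 ^ k)*((b ^ 2 ^ k) ^ 2 ^ k) + (b ^ 2 ^ k)*((b ^ 2 ^ k) ^ 2 ^ k)*(α ^ 2 ^ k)) ^ 2 ^ k = ((a ^ 2 ^ k) ^ 2 ^ k)*(((a ^ 2 ^ k) ^ 2 ^ k) ^ 2 ^ k) + ((a ^ 2 ^ k) ^ 2 ^ k)*(((b ^ 2 ^ k) ^ 2 ^ k) ^ 2 ^ k) + ((b ^ 2 ^ k) ^ 2 ^ k)*(((b ^ 2 ^ k) ^ 2 ^ k) ^ 2 ^ k)*((α ^ 2 ^ k) ^ 2 ^ k) := by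
    simp only [add_pow_char_pow, mul_pow]
    all_goals ring
  have hπ1 : ¬((a ^ 2 ^ k)*((a ^ 2 ^ k) ^ 2 ^ k) + (a ^ 2 ^ k)*((b ^ 2 ^ k) ^ 2 ^ k) + (b ^ 2 ^ k)*((b ^ 2 ^ k) ^ 2 ^ k)*(α ^ 2 ^ k) = 0) := hp1 ▸ pow_ne_zero _ hπ
  have hπ2 : ¬(((a ^ 2 ^ k) ^ 2 ^ k)*(((a ^ 2 ^ k) ^ 2 ^ k) ^ 2 ^ k) + ((a ^ 2 ^ k) ^ 2 ^ k)*(((b ^ 2 ^ k) ^ 2 ^ k) ^ 2 ^ k) + ((b ^ 2 ^ k) ^ 2 ^ k)*(((b ^ 2 ^ k) ^ 2 ^ k) ^ 2 ^ k)*((α ^ 2 ^ k) ^ 2 ^ k) = 0) := hp2 ▸ pow_ne_zero _ hπ1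
  have ht1 : (a*y + b*x) ^ 2 ^ k = (a ^ 2 ^ k)*(y ^ 2 ^ k) + (b ^ 2 ^ k)*(x ^ 2 ^ k) := by
    simp only [add_pow_char_pow, mul_pow]
    all_goals ring
  have ht2 : ((a ^ 2 ^ k)*(y ^ 2 ^ k) + (b ^ 2 ^ k)*(x ^ 2 ^ k)) ^ 2 ^ k = ((a ^ 2 ^ k) ^ 2 ^ k)*((y ^ 2 ^ k) ^ 2 ^ k) + ((b ^ 2 ^ k) ^ 2 ^ k)*((x ^ 2 ^ k) ^ 2 ^ k) := by
    simp only [add_pow_char_pow, mul_pow]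
    all_goals ring
  have hs1 : ((a ^ 2 ^ k)*x + (b ^ 2 ^ k)*α*y + (b ^ 2 ^ k)*x) ^ 2 ^ k = ((a ^ 2 ^ k) ^ 2 ^ k)*(x ^ 2 ^ k) + ((b ^ 2 ^ k) ^ 2 ^ k)*(α ^ 2 ^ k)*(y ^ 2 ^ k) + ((b ^ 2 ^ k) ^ 2 ^ k)*(x ^ 2 ^ k) := by
    simp only [add_pow_char_pow, mul_pow]
    all_goals ring
  have hId2 : ((a ^ 2 ^ k)*x + (b ^ 2 ^ k)*α*y + (b ^ 2 ^ k)*x) * ((a ^ 2 ^ k)*((a ^ 2 ^ k) ^ 2 ^ k) + (a ^ 2 ^ k)*((b ^ 2 ^ k) ^ 2 ^ k) + (b ^ 2 ^ k)*((b ^ 2 ^ k) ^ 2 ^ k)*(α ^ 2 ^ k)) + (((a ^ 2 ^ k) ^ 2 ^ k)*(x ^ 2 ^ k) + ((b ^ 2 ^ k) ^ 2 ^ k)*(α ^ 2 ^ k)*(y ^ 2 ^ k) + ((b ^ 2 ^ k) ^ 2 ^ k)*(x ^ 2 ^ k)) * (a*(a ^ 2 ^ k) + a*(b ^ 2 ^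 k) + b*(b ^ 2 ^ k)*α) + ((a ^ 2 ^ k)*(y ^ 2 ^ k) + (b ^ 2 ^ k)*(x ^ 2 ^ k)) * (a*((a ^ 2 ^ k) ^ 2 ^ k) + a*((b ^ 2 ^ k) ^ 2 ^ k) + a*((b ^ 2 ^ k) ^ 2 ^ k)*(α ^ 2 ^ k) + ((a ^ 2 ^ k) ^ 2 ^ k)*b*α + b*((b ^ 2 ^ k) ^ 2 ^ k)*α) = 0 := by
    linear_combination ((a ^ 2 ^ k)*((a ^ 2 ^ k) ^ 2 ^ k) + (a ^ 2 ^ k)*((b ^ 2 ^ k) ^ 2 ^ k) + (b ^ 2 ^ k)*((b ^ 2 ^ k) ^ 2 ^ k)*(α ^ 2 ^ k)) * e1 + (a*(a ^ 2 ^ k)*((b ^ 2 ^ k) ^ 2 ^ k)*(α ^ 2 ^ k)*(y ^ 2 ^ k) + a*((a ^ 2 ^ k) ^ 2 ^ k)*(b ^ 2 ^ k)*(x ^ 2 ^ k) + a*(b ^ 2 ^ k)*((b ^ 2 ^ k) ^ 2 ^ k)*(x ^ 2 ^ k) + ((a ^ 2 ^ k) ^ 2 ^ k)*b*(b ^ 2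 ^ k)*α*(x ^ 2 ^ k) + b*(b ^ 2 ^ k)*((b ^ 2 ^ k) ^ 2 ^ k)*α*(x ^ 2 ^ k)) * h2
  by_cases hT0 : (a*y + b*x) = 0
  · -- case T = 0
    have hT1 : ((a ^ 2 ^ k)*(y ^ 2 ^ k) + (b ^ 2 ^ k)*(x ^ 2 ^ k)) = 0 := by
      rw [← ht1, hT0]
      exact zero_pow (by positivity : (2 : ℕ) ^ k ≠ 0)
    have hS0 : ((a ^ 2 ^ k)*x + (b ^ 2 ^ k)*α*y + (b ^ 2 ^ k)*x) * ((a ^ 2 ^ k)*((a ^ 2 ^ k) ^ 2 ^ k) + (a ^ 2 ^ k)*((b ^ 2 ^ k) ^ 2 ^ k) + (b ^ 2 ^ k)*((b ^ 2 ^ k) ^ 2 ^ k)*(α ^ 2 ^ k)) + (((a ^ 2 ^ k) ^ 2 ^ k)*(x ^ 2 ^ k) + ((b ^ 2 ^ k) ^ 2 ^ k)*(α ^ 2 ^ k)*(y ^ 2 ^ k) + ((b ^ 2 ^ k) ^ 2 ^ k)*(x ^ 2 ^ k)) * (a*(a ^ 2 ^ k) + a*(b ^ 2 ^ k) + b*(b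 ^ 2 ^ k)*α) = 0 := by
      linear_combination hId2 - (a*((a ^ 2 ^ k) ^ 2 ^ k) + a*((b ^ 2 ^ k) ^ 2 ^ k) + a*((b ^ 2 ^ k) ^ 2 ^ k)*(α ^ 2 ^ k) + ((a ^ 2 ^ k) ^ 2 ^ k)*b*α + b*((b ^ 2 ^ k) ^ 2 ^ k)*α) * hT1
    have hdiv : (((a ^ 2 ^ k)*x + (b ^ 2 ^ k)*α*y + (b ^ 2 ^ k)*x) / (a*(a ^ 2 ^ k) + a*(b ^ 2 ^ k) + b*(b ^ 2 ^ k)*α)) ^ 2 ^ k = ((a ^ 2 ^ k)*x + (b ^ 2 ^ k)*α*y + (b ^ 2 ^ k)*x) / (a*(a ^ 2 ^ k) + a*(b ^ 2 ^ k) + b*(b ^ 2 ^ k)*α) := by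
      rw [div_pow, hs1, hp1, div_eq_div_iff hπ1 hπ]
      linear_combination hS0 + (-(a ^ 2 ^ k)*((a ^ 2 ^ k) ^ 2 ^ k)*(b ^ 2 ^ k)*α*y - (a ^ 2 ^ k)*((a ^ 2 ^ k) ^ 2 ^ k)*(b ^ 2 ^ k)*x - (a ^ 2 ^ k)*(b ^ 2 ^ k)*((b ^ 2 ^ k) ^ 2 ^ k)*α*y - (a ^ 2 ^ k)*(b ^ 2 ^ k)*((b ^ 2 ^ k) ^ 2 ^ k)*(α ^ 2 ^ k)*x - (a ^ 2 ^ k)*(b ^ 2 ^ k)*((b ^ 2 ^ k) ^ 2 ^ k)*x - (a ^ 2 ^ k) ^ 2*((a ^ 2 ^ k) ^ 2 ^ k)*x - (a ^ 2 ^ k) ^ 2*((b ^ 2 ^ k) ^ 2 ^ k)*x - (b ^ 2 ^ k) ^ 2*((b ^ 2 ^ k) ^ 2 ^ k)*α*(α ^ 2 ^ k)*y - (b ^ 2 ^ k) ^ 2*((b ^ 2 ^ k) ^ 2 ^ k)*(α ^ 2 ^ k)*x) * h2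
    rcases aux_fix m k hm hk h _ hdiv with hz0 | hz1
    · left
      have hS : ((a ^ 2 ^ k)*x + (b ^ 2 ^ k)*α*y + (b ^ 2 ^ k)*x) = 0 := by
        rcases div_eq_zero_iff.mp hz0 with h' | h'
        · exact h'
        · exact absurd h' hπ
      constructor
      · have hx : (a*(a ^ 2 ^ k) + a*(b ^ 2 ^ k) + b*(b ^ 2 ^ k)*α) * x = 0 := by
          linear_combination (a) * hS + ((b ^ 2 ^ k)*α) * hT0 + (-a*(b ^ 2 ^ k)*α*y) * h2
        exact (mul_eq_zero.mp hx).resolve_left hπ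
      · have hy : (a*(a ^ 2 ^ k) + a*(b ^ 2 ^ k) + b*(b ^ 2 ^ k)*α) * y = 0 := by
          linear_combination (b) * hS + ((a ^ 2 ^ k) + (b ^ 2 ^ k)) * hT0 + (-(a ^ 2 ^ k)*b*x - b*(b ^ 2 ^ k)*x) * h2
        exact (mul_eq_zero.mp hy).resolve_left hπ
    · right
      have hS : ((a ^ 2 ^ k)*x + (b ^ 2 ^ k)*α*y + (b ^ 2 ^ k)*x) - (a*(a ^ 2 ^ k) + a*(b ^ 2 ^ k) + b*(b ^ 2 ^ k)*α) = 0 := by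
        have h' := (div_eq_one_iff_eq hπ).mp hz1
        linear_combination h'
      constructor
      · have hx : (a*(a ^ 2 ^ k) + a*(b ^ 2 ^ k) + b*(b ^ 2 ^ k)*α) * x = (a*(a ^ 2 ^ k) + a*(b ^ 2 ^ k) + b*(b ^ 2 ^ k)*α) * a := by
          linear_combination (a) * hS + ((b ^ 2 ^ k)*α) * hT0 + (-a*(b ^ 2 ^ k)*α*y) * h2
        exact mul_left_cancel₀ hπ hx
      · have hy : (a*(a ^ 2 ^ k) + a*(b ^ 2 ^ k) + b*(b ^ 2 ^ k)*α) * y = (a*(a ^ 2 ^ k) + a*(b ^ 2 ^ k) + b*(b ^ 2 ^ k)*α) * b := by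
          linear_combination (b) * hS + ((a ^ 2 ^ k) + (b ^ 2 ^ k)) * hT0 + (-(a ^ 2 ^ k)*b*x - b*(b ^ 2 ^ k)*x) * h2
        exact mul_left_cancel₀ hπ hy
  · -- case T ≠ 0
    exfalso
    have hT1ne : ¬(((a ^ 2 ^ k)*(y ^ 2 ^ k) + (b ^ 2 ^ k)*(x ^ 2 ^ k)) = 0) := ht1 ▸ pow_ne_zero _ hT0
    have hii : (((a ^ 2 ^ k) ^ 2 ^ k)*(x ^ 2 ^ k) + ((b ^ 2 ^ k) ^ 2 ^ k)*(α ^ 2 ^ k)*(y ^ 2 ^ k) + ((b ^ 2 ^ k) ^ 2 ^ k)*(x ^ 2 ^ k)) * (((a ^ 2 ^ k) ^ 2 ^ k)*(((a ^ 2 ^ k) ^ 2 ^ k) ^ 2 ^ k) + ((a ^ 2 ^ k) ^ 2 ^ k)*(((b ^ 2 ^ k) ^ 2 ^ k) ^ 2 ^ k) + ((b ^ 2 ^ k) ^ 2 ^ k)*(((b ^ 2 ^ k) ^ 2 ^ k) ^ 2 ^ k)*((α ^ 2 ^ k) ^ 2 ^ k)) + ((((a ^ 2 ^ k) ^ 2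 ^ k) ^ 2 ^ k)*((x ^ 2 ^ k) ^ 2 ^ k) + (((b ^ 2 ^ k) ^ 2 ^ k) ^ 2 ^ k)*((α ^ 2 ^ k) ^ 2 ^ k)*((y ^ 2 ^ k) ^ 2 ^ k) + (((b ^ 2 ^ k) ^ 2 ^ k) ^ 2 ^ k)*((x ^ 2 ^ k) ^ 2 ^ k)) * ((a ^ 2 ^ k)*((a ^ 2 ^ k) ^ 2 ^ k) + (a ^ 2 ^ k)*((b ^ 2 ^ k) ^ 2 ^ k) + (b ^ 2 ^ k)*((b ^ 2 ^ k) ^ 2 ^ k)*(α ^ 2 ^ k)) + (((a ^ 2 ^ k) ^ 2 ^ k)*((y ^ 2 ^ k) ^ 2 ^ k) + ((b ^ 2 ^ k) ^ 2 ^ k)*((x ^ 2 ^ k) ^ 2 ^ k)) * ((a ^ 2 ^ k)*(((a ^ 2 ^ k) ^ 2 ^ k) ^ 2 ^ k) + (a ^ 2 ^ k)*(((b ^ 2 ^ k) ^ 2 ^ k) ^ 2 ^ k) + (a ^ 2 ^ k)*(((b ^ 2 ^ k) ^ 2 ^ k) ^ 2 ^ k)*((α ^ 2 ^ k) ^ 2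 ^ k) + (((a ^ 2 ^ k) ^ 2 ^ k) ^ 2 ^ k)*(b ^ 2 ^ k)*(α ^ 2 ^ k) + (b ^ 2 ^ k)*(((b ^ 2 ^ k) ^ 2 ^ k) ^ 2 ^ k)*(α ^ 2 ^ k)) = 0 := by
      have h' : (((a ^ 2 ^ k)*x + (b ^ 2 ^ k)*α*y + (b ^ 2 ^ k)*x) * ((a ^ 2 ^ k)*((a ^ 2 ^ k) ^ 2 ^ k) + (a ^ 2 ^ k)*((b ^ 2 ^ k) ^ 2 ^ k) + (b ^ 2 ^ k)*((b ^ 2 ^ k) ^ 2 ^ k)*(α ^ 2 ^ k)) + (((a ^ 2 ^ k) ^ 2 ^ k)*(x ^ 2 ^ k) + ((b ^ 2 ^ k) ^ 2 ^ k)*(α ^ 2 ^ k)*(y ^ 2 ^ k) + ((b ^ 2 ^ k) ^ 2 ^ k)*(x ^ 2 ^ k)) * (a*(a ^ 2 ^ k) + a*(b ^ 2 ^ k) + b*(b ^ 2 ^ k)*α) + ((a ^ 2 ^ k)*(y ^ 2 ^ k) + (b ^ 2 ^ k)*(x ^ 2 ^ k)) * (a*((a ^ 2 ^ k) ^ 2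 ^ k) + a*((b ^ 2 ^ k) ^ 2 ^ k) + a*((b ^ 2 ^ k) ^ 2 ^ k)*(α ^ 2 ^ k) + ((a ^ 2 ^ k) ^ 2 ^ k)*b*α + b*((b ^ 2 ^ k) ^ 2 ^ k)*α)) ^ 2 ^ k = 0 := by
        rw [hId2]
        exact zero_pow (by positivity : (2 : ℕ) ^ k ≠ 0)
      simp only [add_pow_char_pow, mul_pow] at h'
      linear_combination h'
    have hiii : (((a ^ 2 ^ k) ^ 2 ^ k)*(((a ^ 2 ^ k) ^ 2 ^ k) ^ 2 ^ k) + ((a ^ 2 ^ k) ^ 2 ^ k)*(((b ^ 2 ^ k) ^ 2 ^ k) ^ 2 ^ k) + ((b ^ 2 ^ k) ^ 2 ^ k)*(((b ^ 2 ^ k) ^ 2 ^ k) ^ 2 ^ k)*((α ^ 2 ^ k) ^ 2 ^ k)) * (((a ^ 2 ^ k)*x + (b ^ 2 ^ k)*α*y + (b ^ 2 ^ k)*x) * (a*((a ^ 2 ^ k) ^ 2 ^ k) + a*((b ^ 2 ^ k) ^ 2 ^ k) + a*((b ^ 2 ^ k) ^ 2 ^ k)*(α ^ 2 ^ k) + ((a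 ^ 2 ^ k) ^ 2 ^ k)*b*α + b*((b ^ 2 ^ k) ^ 2 ^ k)*α)) + (((a ^ 2 ^ k) ^ 2 ^ k)*(((a ^ 2 ^ k) ^ 2 ^ k) ^ 2 ^ k) + ((a ^ 2 ^ k) ^ 2 ^ k)*(((b ^ 2 ^ k) ^ 2 ^ k) ^ 2 ^ k) + ((b ^ 2 ^ k) ^ 2 ^ k)*(((b ^ 2 ^ k) ^ 2 ^ k) ^ 2 ^ k)*((α ^ 2 ^ k) ^ 2 ^ k)) * ((a*y + b*x) * (α * ((a ^ 2 ^ k)*((a ^ 2 ^ k) ^ 2 ^ k) + (a ^ 2 ^ k)*((b ^ 2 ^ k) ^ 2 ^ k) + (b ^ 2 ^ k)*((b ^ 2 ^ k) ^ 2 ^ k)*(α ^ 2 ^ k))))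
        + (a*(a ^ 2 ^ k) + a*(b ^ 2 ^ k) + b*(b ^ 2 ^ k)*α) * (((((a ^ 2 ^ k) ^ 2 ^ k) ^ 2 ^ k)*((x ^ 2 ^ k) ^ 2 ^ k) + (((b ^ 2 ^ k) ^ 2 ^ k) ^ 2 ^ k)*((α ^ 2 ^ k) ^ 2 ^ k)*((y ^ 2 ^ k) ^ 2 ^ k) + (((b ^ 2 ^ k) ^ 2 ^ k) ^ 2 ^ k)*((x ^ 2 ^ k) ^ 2 ^ k)) * (a*((a ^ 2 ^ k) ^ 2 ^ k) + a*((b ^ 2 ^ k) ^ 2 ^ k) + a*((b ^ 2 ^ k) ^ 2 ^ k)*(α ^ 2 ^ k) + ((a ^ 2 ^ k) ^ 2 ^ k)*b*α + b*((b ^ 2 ^ k) ^ 2 ^ k)*α)) + (a*(a ^ 2 ^ k) + a*(b ^ 2 ^ k) + b*(b ^ 2 ^ k)*α) * ((((a ^ 2 ^ k) ^ 2 ^ k)*((y ^ 2 ^ k) ^ 2 ^ k) + ((b ^ 2 ^ k) ^ 2 ^ k)*((x ^ 2 ^ k) ^ 2 ^ k)) * (a*(((a ^ 2 ^ k) ^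 2 ^ k) ^ 2 ^ k) + a*(((a ^ 2 ^ k) ^ 2 ^ k) ^ 2 ^ k)*(α ^ 2 ^ k) + a*(((b ^ 2 ^ k) ^ 2 ^ k) ^ 2 ^ k) + a*(((b ^ 2 ^ k) ^ 2 ^ k) ^ 2 ^ k)*(α ^ 2 ^ k) + a*(((b ^ 2 ^ k) ^ 2 ^ k) ^ 2 ^ k)*((α ^ 2 ^ k) ^ 2 ^ k) + (((a ^ 2 ^ k) ^ 2 ^ k) ^ 2 ^ k)*b*α + b*(((b ^ 2 ^ k) ^ 2 ^ k) ^ 2 ^ k)*α + b*(((b ^ 2 ^ k) ^ 2 ^ k) ^ 2 ^ k)*α*((α ^ 2 ^ k) ^ 2 ^ k))) = 0 := by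
      linear_combination (a*(a ^ 2 ^ k)*((a ^ 2 ^ k) ^ 2 ^ k)*(((a ^ 2 ^ k) ^ 2 ^ k) ^ 2 ^ k) + a*(a ^ 2 ^ k)*((a ^ 2 ^ k) ^ 2 ^ k)*(((b ^ 2 ^ k) ^ 2 ^ k) ^ 2 ^ k) + a*(a ^ 2 ^ k)*((b ^ 2 ^ k) ^ 2 ^ k)*(((b ^ 2 ^ k) ^ 2 ^ k) ^ 2 ^ k)*((α ^ 2 ^ k) ^ 2 ^ k) + a*((a ^ 2 ^ k) ^ 2 ^ k)*(((a ^ 2 ^ k) ^ 2 ^ k) ^ 2 ^ k)*(b ^ 2 ^ k) + a*((a ^ 2 ^ k) ^ 2 ^ k)*(b ^ 2 ^ k)*(((b ^ 2 ^ k) ^ 2 ^ k) ^ 2 ^ k) + a*(b ^ 2 ^ k)*((b ^ 2 ^ k) ^ 2 ^ k)*(((b ^ 2 ^ k) ^ 2 ^ k) ^ 2 ^ k)*((α ^ 2 ^ k) ^ 2 ^ k) + ((a ^ 2 ^ k) ^ 2 ^ k)*(((a ^ 2 ^ k) ^ 2 ^ k) ^ 2 ^ k)*b*(b ^ 2 ^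 k)*α + ((a ^ 2 ^ k) ^ 2 ^ k)*b*(b ^ 2 ^ k)*(((b ^ 2 ^ k) ^ 2 ^ k) ^ 2 ^ k)*α + b*(b ^ 2 ^ k)*((b ^ 2 ^ k) ^ 2 ^ k)*(((b ^ 2 ^ k) ^ 2 ^ k) ^ 2 ^ k)*α*((α ^ 2 ^ k) ^ 2 ^ k)) * e2 + (a*(a ^ 2 ^ k)*((a ^ 2 ^ k) ^ 2 ^ k)*b*(((b ^ 2 ^ k) ^ 2 ^ k) ^ 2 ^ k)*α*((α ^ 2 ^ k) ^ 2 ^ k)*((y ^ 2 ^ k) ^ 2 ^ k) + a*(a ^ 2 ^ k)*(((a ^ 2 ^ k) ^ 2 ^ k) ^ 2 ^ k)*b*((b ^ 2 ^ k) ^ 2 ^ k)*α*((x ^ 2 ^ k) ^ 2 ^ k) + a*(a ^ 2 ^ k)*b*((b ^ 2 ^ k) ^ 2 ^ k)*(((b ^ 2 ^ k) ^ 2 ^ k) ^ 2 ^ k)*α*((x ^ 2 ^ k) ^ 2 ^ k) + a*((a ^ 2 ^ k) ^ 2 ^ k)*(((a ^ 2 ^ k) ^ 2 ^ k) ^ 2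 ^ k)*(b ^ 2 ^ k)*((b ^ 2 ^ k) ^ 2 ^ k)*α*(α ^ 2 ^ k)*y + 2*a*((a ^ 2 ^ k) ^ 2 ^ k)*b*(b ^ 2 ^ k)*(((b ^ 2 ^ k) ^ 2 ^ k) ^ 2 ^ k)*α*((α ^ 2 ^ k) ^ 2 ^ k)*((y ^ 2 ^ k) ^ 2 ^ k) + a*((a ^ 2 ^ k) ^ 2 ^ k)*(b ^ 2 ^ k)*((b ^ 2 ^ k) ^ 2 ^ k)*(((b ^ 2 ^ k) ^ 2 ^ k) ^ 2 ^ k)*α*(α ^ 2 ^ k)*y + a*(((a ^ 2 ^ k) ^ 2 ^ k) ^ 2 ^ k)*b*(b ^ 2 ^ k)*((b ^ 2 ^ k) ^ 2 ^ k)*α*(α ^ 2 ^ k)*((x ^ 2 ^ k) ^ 2 ^ k) + 2*a*(((a ^ 2 ^ k) ^ 2 ^ k) ^ 2 ^ k)*b*(b ^ 2 ^ k)*((b ^ 2 ^ k) ^ 2 ^ k)*α*((x ^ 2 ^ k) ^ 2 ^ k) + a*b*(b ^ 2 ^ k)*((b ^ 2 ^ k) ^ 2 ^ k)*(((b ^ 2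 ^ k) ^ 2 ^ k) ^ 2 ^ k)*α*(α ^ 2 ^ k)*((x ^ 2 ^ k) ^ 2 ^ k) + 2*a*b*(b ^ 2 ^ k)*((b ^ 2 ^ k) ^ 2 ^ k)*(((b ^ 2 ^ k) ^ 2 ^ k) ^ 2 ^ k)*α*((x ^ 2 ^ k) ^ 2 ^ k) + a*(b ^ 2 ^ k)*((b ^ 2 ^ k) ^ 2 ^ k) ^ 2*(((b ^ 2 ^ k) ^ 2 ^ k) ^ 2 ^ k)*α*(α ^ 2 ^ k)*((α ^ 2 ^ k) ^ 2 ^ k)*y + a ^ 2*(a ^ 2 ^ k)*((a ^ 2 ^ k) ^ 2 ^ k)*(((b ^ 2 ^ k) ^ 2 ^ k) ^ 2 ^ k)*((α ^ 2 ^ k) ^ 2 ^ k)*((y ^ 2 ^ k) ^ 2 ^ k) + a ^ 2*(a ^ 2 ^ k)*(((a ^ 2 ^ k) ^ 2 ^ k) ^ 2 ^ k)*((b ^ 2 ^ k) ^ 2 ^ k)*(α ^ 2 ^ k)*((x ^ 2 ^ k) ^ 2 ^ k) + a ^ 2*(a ^ 2 ^ k)*(((a ^ 2 ^ k) ^ 2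 ^ k) ^ 2 ^ k)*((b ^ 2 ^ k) ^ 2 ^ k)*((x ^ 2 ^ k) ^ 2 ^ k) + a ^ 2*(a ^ 2 ^ k)*((b ^ 2 ^ k) ^ 2 ^ k)*(((b ^ 2 ^ k) ^ 2 ^ k) ^ 2 ^ k)*(α ^ 2 ^ k)*((x ^ 2 ^ k) ^ 2 ^ k) + a ^ 2*(a ^ 2 ^ k)*((b ^ 2 ^ k) ^ 2 ^ k)*(((b ^ 2 ^ k) ^ 2 ^ k) ^ 2 ^ k)*((x ^ 2 ^ k) ^ 2 ^ k) + a ^ 2*((a ^ 2 ^ k) ^ 2 ^ k)*(b ^ 2 ^ k)*(((b ^ 2 ^ k) ^ 2 ^ k) ^ 2 ^ k)*((α ^ 2 ^ k) ^ 2 ^ k)*((y ^ 2 ^ k) ^ 2 ^ k) + a ^ 2*(((a ^ 2 ^ k) ^ 2 ^ k) ^ 2 ^ k)*(b ^ 2 ^ k)*((b ^ 2 ^ k) ^ 2 ^ k)*(α ^ 2 ^ k)*((x ^ 2 ^ k) ^ 2 ^ k) + a ^ 2*(((a ^ 2 ^ k) ^ 2 ^ k) ^ 2 ^ k)*(b ^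 2 ^ k)*((b ^ 2 ^ k) ^ 2 ^ k)*((x ^ 2 ^ k) ^ 2 ^ k) + a ^ 2*(b ^ 2 ^ k)*((b ^ 2 ^ k) ^ 2 ^ k)*(((b ^ 2 ^ k) ^ 2 ^ k) ^ 2 ^ k)*(α ^ 2 ^ k)*((x ^ 2 ^ k) ^ 2 ^ k) + a ^ 2*(b ^ 2 ^ k)*((b ^ 2 ^ k) ^ 2 ^ k)*(((b ^ 2 ^ k) ^ 2 ^ k) ^ 2 ^ k)*((x ^ 2 ^ k) ^ 2 ^ k) + (a ^ 2 ^ k)*((a ^ 2 ^ k) ^ 2 ^ k)*(((a ^ 2 ^ k) ^ 2 ^ k) ^ 2 ^ k)*b*((b ^ 2 ^ k) ^ 2 ^ k)*α*x + (a ^ 2 ^ k)*((a ^ 2 ^ k) ^ 2 ^ k)*b*((b ^ 2 ^ k) ^ 2 ^ k)*(((b ^ 2 ^ k) ^ 2 ^ k) ^ 2 ^ k)*α*((α ^ 2 ^ k) ^ 2 ^ k)*x + (a ^ 2 ^ k)*((a ^ 2 ^ k) ^ 2 ^ k)*b*((b ^ 2 ^ k) ^ 2 ^ k)*(((b ^ 2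 ^ k) ^ 2 ^ k) ^ 2 ^ k)*α*x + (a ^ 2 ^ k)*((a ^ 2 ^ k) ^ 2 ^ k) ^ 2*(((a ^ 2 ^ k) ^ 2 ^ k) ^ 2 ^ k)*b*α*x + (a ^ 2 ^ k)*((a ^ 2 ^ k) ^ 2 ^ k) ^ 2*b*(((b ^ 2 ^ k) ^ 2 ^ k) ^ 2 ^ k)*α*x + (a ^ 2 ^ k)*b*((b ^ 2 ^ k) ^ 2 ^ k) ^ 2*(((b ^ 2 ^ k) ^ 2 ^ k) ^ 2 ^ k)*α*((α ^ 2 ^ k) ^ 2 ^ k)*x + ((a ^ 2 ^ k) ^ 2 ^ k)*b ^ 2*(b ^ 2 ^ k)*(((b ^ 2 ^ k) ^ 2 ^ k) ^ 2 ^ k)*α ^ 2*((α ^ 2 ^ k) ^ 2 ^ k)*((y ^ 2 ^ k) ^ 2 ^ k) + (((a ^ 2 ^ k) ^ 2 ^ k) ^ 2 ^ k)*b ^ 2*(b ^ 2 ^ k)*((b ^ 2 ^ k) ^ 2 ^ k)*α ^ 2*((x ^ 2 ^ k) ^ 2 ^ k) + b ^ 2*(b ^ 2 ^ k)*((b ^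 2 ^ k) ^ 2 ^ k)*(((b ^ 2 ^ k) ^ 2 ^ k) ^ 2 ^ k)*α ^ 2*((x ^ 2 ^ k) ^ 2 ^ k)) * h2
    have hN : ((a ^ 2 ^ k)*((a ^ 2 ^ k) ^ 2 ^ k) + (a ^ 2 ^ k)*((b ^ 2 ^ k) ^ 2 ^ k) + (b ^ 2 ^ k)*((b ^ 2 ^ k) ^ 2 ^ k)*(α ^ 2 ^ k)) * (a*(((a ^ 2 ^ k) ^ 2 ^ k) ^ 2 ^ k) + a*(((a ^ 2 ^ k) ^ 2 ^ k) ^ 2 ^ k)*(α ^ 2 ^ k) + a*(((b ^ 2 ^ k) ^ 2 ^ k) ^ 2 ^ k) + a*(((b ^ 2 ^ k) ^ 2 ^ k) ^ 2 ^ k)*(α ^ 2 ^ k) + a*(((b ^ 2 ^ k) ^ 2 ^ k) ^ 2 ^ k)*((α ^ 2 ^ k) ^ 2 ^ k) + (((a ^ 2 ^ k) ^ 2 ^ k) ^ 2 ^ k)*b*α + b*(((b ^ 2 ^ k) ^ 2 ^ k) ^ 2 ^ k)*α + b*(((b ^ 2 ^ k) ^ 2 ^ k) ^ 2 ^ k)*α*((α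 ^ 2 ^ k) ^ 2 ^ k)) = α ^ 2 ^ k * ((a*(a ^ 2 ^ k) + a*(b ^ 2 ^ k) + b*(b ^ 2 ^ k)*α) * (((a ^ 2 ^ k) ^ 2 ^ k)*(((a ^ 2 ^ k) ^ 2 ^ k) ^ 2 ^ k) + ((a ^ 2 ^ k) ^ 2 ^ k)*(((b ^ 2 ^ k) ^ 2 ^ k) ^ 2 ^ k) + ((b ^ 2 ^ k) ^ 2 ^ k)*(((b ^ 2 ^ k) ^ 2 ^ k) ^ 2 ^ k)*((α ^ 2 ^ k) ^ 2 ^ k))) + ((a ^ 2 ^ k)*(((a ^ 2 ^ k) ^ 2 ^ k) ^ 2 ^ k) + (a ^ 2 ^ k)*(((b ^ 2 ^ k) ^ 2 ^ k) ^ 2 ^ k) + (a ^ 2 ^ k)*(((b ^ 2 ^ k) ^ 2 ^ k) ^ 2 ^ k)*((α ^ 2 ^ k) ^ 2 ^ k) + (((a ^ 2 ^ k) ^ 2 ^ k) ^ 2 ^ k)*(b ^ 2 ^ k)*(α ^ 2 ^ k) + (b ^ 2 ^ k)*(((b ^ 2 ^ k) ^ 2 ^ k) ^ 2 ^ k)*(α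 ^ 2 ^ k)) * (a*((a ^ 2 ^ k) ^ 2 ^ k) + a*((b ^ 2 ^ k) ^ 2 ^ k) + a*((b ^ 2 ^ k) ^ 2 ^ k)*(α ^ 2 ^ k) + ((a ^ 2 ^ k) ^ 2 ^ k)*b*α + b*((b ^ 2 ^ k) ^ 2 ^ k)*α) := by
      linear_combination (-a*(a ^ 2 ^ k)*((b ^ 2 ^ k) ^ 2 ^ k)*(((b ^ 2 ^ k) ^ 2 ^ k) ^ 2 ^ k)*(α ^ 2 ^ k)*((α ^ 2 ^ k) ^ 2 ^ k) - a*((a ^ 2 ^ k) ^ 2 ^ k)*(((a ^ 2 ^ k) ^ 2 ^ k) ^ 2 ^ k)*(b ^ 2 ^ k)*(α ^ 2 ^ k) - a*((a ^ 2 ^ k) ^ 2 ^ k)*(b ^ 2 ^ k)*(((b ^ 2 ^ k) ^ 2 ^ k) ^ 2 ^ k)*(α ^ 2 ^ k) - ((a ^ 2 ^ k) ^ 2 ^ k)*(((a ^ 2 ^ k) ^ 2 ^ k) ^ 2 ^ k)*b*(b ^ 2 ^ k)*α*(α ^ 2 ^ k) - ((a ^ 2 ^ k) ^ 2 ^ k)*b*(b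 ^ 2 ^ k)*(((b ^ 2 ^ k) ^ 2 ^ k) ^ 2 ^ k)*α*(α ^ 2 ^ k)) * h2
    have hstar' : (((a ^ 2 ^ k) ^ 2 ^ k)*(((a ^ 2 ^ k) ^ 2 ^ k) ^ 2 ^ k) + ((a ^ 2 ^ k) ^ 2 ^ k)*(((b ^ 2 ^ k) ^ 2 ^ k) ^ 2 ^ k) + ((b ^ 2 ^ k) ^ 2 ^ k)*(((b ^ 2 ^ k) ^ 2 ^ k) ^ 2 ^ k)*((α ^ 2 ^ k) ^ 2 ^ k)) * ((a*((a ^ 2 ^ k) ^ 2 ^ k) + a*((b ^ 2 ^ k) ^ 2 ^ k) + a*((b ^ 2 ^ k) ^ 2 ^ k)*(α ^ 2 ^ k) + ((a ^ 2 ^ k) ^ 2 ^ k)*b*α + b*((b ^ 2 ^ k) ^ 2 ^ k)*α) * (a*((a ^ 2 ^ k) ^ 2 ^ k) + a*((b ^ 2 ^ k) ^ 2 ^ k) + a*((b ^ 2 ^ k) ^ 2 ^ k)*(α ^ 2 ^ k) + ((a ^ 2 ^ k) ^ 2 ^ k)*b*α + b*((b ^ 2 ^ k) ^ 2 ^ k)*α)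 * ((a ^ 2 ^ k)*(y ^ 2 ^ k) + (b ^ 2 ^ k)*(x ^ 2 ^ k)) + α * (((a ^ 2 ^ k)*((a ^ 2 ^ k) ^ 2 ^ k) + (a ^ 2 ^ k)*((b ^ 2 ^ k) ^ 2 ^ k) + (b ^ 2 ^ k)*((b ^ 2 ^ k) ^ 2 ^ k)*(α ^ 2 ^ k)) * (((a ^ 2 ^ k)*((a ^ 2 ^ k) ^ 2 ^ k) + (a ^ 2 ^ k)*((b ^ 2 ^ k) ^ 2 ^ k) + (b ^ 2 ^ k)*((b ^ 2 ^ k) ^ 2 ^ k)*(α ^ 2 ^ k)) * (a*y + b*x)))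
        + α ^ 2 ^ k * ((a*(a ^ 2 ^ k) + a*(b ^ 2 ^ k) + b*(b ^ 2 ^ k)*α) * ((a*(a ^ 2 ^ k) + a*(b ^ 2 ^ k) + b*(b ^ 2 ^ k)*α) * (((a ^ 2 ^ k) ^ 2 ^ k)*((y ^ 2 ^ k) ^ 2 ^ k) + ((b ^ 2 ^ k) ^ 2 ^ k)*((x ^ 2 ^ k) ^ 2 ^ k))))) = 0 :=
      aux_alg1 _ _ _ _ _ _ _ _ _ _ _ _ _ _ h2 hId2 hii hiii hN
    have hstar : (a*((a ^ 2 ^ k) ^ 2 ^ k) + a*((b ^ 2 ^ k) ^ 2 ^ k) + a*((b ^ 2 ^ k) ^ 2 ^ k)*(α ^ 2 ^ k) + ((a ^ 2 ^ k) ^ 2 ^ k)*b*α + b*((b ^ 2 ^ k) ^ 2 ^ k)*α) * (a*((a ^ 2 ^ k) ^ 2 ^ k) + a*((b ^ 2 ^ k) ^ 2 ^ k) + a*((b ^ 2 ^ k) ^ 2 ^ k)*(α ^ 2 ^ k) + ((a ^ 2 ^ k) ^ 2 ^ k)*b*α + b*((b ^ 2 ^ k) ^ 2 ^ k)*α) *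 ((a ^ 2 ^ k)*(y ^ 2 ^ k) + (b ^ 2 ^ k)*(x ^ 2 ^ k)) + α * (((a ^ 2 ^ k)*((a ^ 2 ^ k) ^ 2 ^ k) + (a ^ 2 ^ k)*((b ^ 2 ^ k) ^ 2 ^ k) + (b ^ 2 ^ k)*((b ^ 2 ^ k) ^ 2 ^ k)*(α ^ 2 ^ k)) * (((a ^ 2 ^ k)*((a ^ 2 ^ k) ^ 2 ^ k) + (a ^ 2 ^ k)*((b ^ 2 ^ k) ^ 2 ^ k) + (b ^ 2 ^ k)*((b ^ 2 ^ k) ^ 2 ^ k)*(α ^ 2 ^ k)) * (a*y + b*x)))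
        + α ^ 2 ^ k * ((a*(a ^ 2 ^ k) + a*(b ^ 2 ^ k) + b*(b ^ 2 ^ k)*α) * ((a*(a ^ 2 ^ k) + a*(b ^ 2 ^ k) + b*(b ^ 2 ^ k)*α) * (((a ^ 2 ^ k) ^ 2 ^ k)*((y ^ 2 ^ k) ^ 2 ^ k) + ((b ^ 2 ^ k) ^ 2 ^ k)*((x ^ 2 ^ k) ^ 2 ^ k)))) = 0 :=
      (mul_eq_zero.mp hstar').resolve_left hπ2
    obtain ⟨ξ, hξ0⟩ := aux_sqrt m hm (α * ((a ^ 2 ^ k)*(y ^ 2 ^ k) + (b ^ 2 ^ k)*(x ^ 2 ^ k)) / (a*y + b*x))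
    have hxi : ξ ^ 2 * (a*y + b*x) = α * ((a ^ 2 ^ k)*(y ^ 2 ^ k) + (b ^ 2 ^ k)*(x ^ 2 ^ k)) := by
      rw [hξ0]
      exact div_mul_cancel₀ _ hT0
    have hxi1 : (ξ ^ 2 ^ k) ^ 2 * ((a ^ 2 ^ k)*(y ^ 2 ^ k) + (b ^ 2 ^ k)*(x ^ 2 ^ k)) = α ^ 2 ^ k * (((a ^ 2 ^ k) ^ 2 ^ k)*((y ^ 2 ^ k) ^ 2 ^ k) + ((b ^ 2 ^ k) ^ 2 ^ k)*((x ^ 2 ^ k) ^ 2 ^ k)) := by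
      have h' := congrArg (fun w => w ^ 2 ^ k) hxi
      simp only [mul_pow, add_pow_char_pow] at h'
      linear_combination h'
    have hkey := aux_alg2 (a*(a ^ 2 ^ k) + a*(b ^ 2 ^ k) + b*(b ^ 2 ^ k)*α) ((a ^ 2 ^ k)*((a ^ 2 ^ k) ^ 2 ^ k) + (a ^ 2 ^ k)*((b ^ 2 ^ k) ^ 2 ^ k) + (b ^ 2 ^ k)*((b ^ 2 ^ k) ^ 2 ^ k)*(α ^ 2 ^ k)) (a*((a ^ 2 ^ k) ^ 2 ^ k) + a*((b ^ 2 ^ k) ^ 2 ^ k) + a*((b ^ 2 ^ k) ^ 2 ^ k)*(α ^ 2 ^ k) + ((a ^ 2 ^ k) ^ 2 ^ k)*b*α + b*((b ^ 2 ^ k) ^ 2 ^ k)*α) _ _ _ _ _ _ _ h2 hxi hxi1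
    rw [hstar, mul_zero, mul_zero] at hkey
    have hPHI : (a*(a ^ 2 ^ k) + a*(b ^ 2 ^ k) + b*(b ^ 2 ^ k)*α) * (ξ ^ 2 ^ k * ξ) + (a*((a ^ 2 ^ k) ^ 2 ^ k) + a*((b ^ 2 ^ k) ^ 2 ^ k) + a*((b ^ 2 ^ k) ^ 2 ^ k)*(α ^ 2 ^ k) + ((a ^ 2 ^ k) ^ 2 ^ k)*b*α + b*((b ^ 2 ^ k) ^ 2 ^ k)*α) * ξ + α * ((a ^ 2 ^ k)*((a ^ 2 ^ k) ^ 2 ^ k) + (a ^ 2 ^ k)*((b ^ 2 ^ k) ^ 2 ^ k) + (b ^ 2 ^ k)*((b ^ 2 ^ k) ^ 2 ^ k)*(α ^ 2 ^ k)) = 0 := by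
      rcases mul_eq_zero.mp hkey with h' | h'
      · exact absurd h' hT0
      · rcases mul_eq_zero.mp h' with h'' | h''
        · exact absurd h'' hT1ne
        · exact mul_self_eq_zero.mp h''
    have hXY : ¬((a*ξ + (b ^ 2 ^ k)*α) = 0 ∧ ((a ^ 2 ^ k) + b*ξ + (b ^ 2 ^ k)) = 0) := by
      rintro ⟨hX, hY⟩
      apply hπ
      linear_combination (b) * hX + (a) * hY + (-a*b*ξ) * h2
    apply aux_Pne m k α hα _ _ hXY
    simp only [add_pow_char_pow, mul_pow]
    linear_combination hPHI + ((a ^ 2 ^ k)*(b ^ 2 ^ k)*(ξ ^ 2 ^ k)*α + ((a ^ 2 ^ k) ^ 2 ^ k)*(b ^ 2 ^ k)*α + (b ^ 2 ^ k)*((b ^ 2 ^ k) ^ 2 ^ k)*α + (b ^ 2 ^ k) ^ 2*(ξ ^ 2 ^ k)*α) * h2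

private lemma aux_apn {V : Type*} [AddCommGroup V] (F : V → V)
    (hkey : ∀ A : V, A ≠ 0 → ∀ z z0 : V,
      F (z + A) + F z = F (z0 + A) + F z0 → z = z0 ∨ z = z0 + A) :
    IsAPN F := by
  intro A hA B
  rcases Set.eq_empty_or_nonempty {x : V | F (x + A) + F x = B} with hS | ⟨z0, hz0⟩
  · rw [hS]
    simp
  · have hz0' : F (z0 + A) + F z0 = B := hz0
    have hsub : {x : V | F (x + A) + F x = B} ⊆ {z0, z0 + A} := by
      intro z hz
      have hz' : F (z + A) + F z = B := hz
      rcases hkey A hA z z0 (hz'.trans hz0'.symm) with h' | h'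
      · exact Or.inl h'
      · exact Or.inr h'
    refine le_trans (Set.ncard_le_ncard hsub (Set.toFinite _)) ?_
    refine le_trans (Set.ncard_insert_le _ _) ?_
    simp

theorem stmt_2 (m k : ℕ) (hm : 0 < m) (hk : 0 < k) (h : Nat.gcd k m = 1)
    (α : GaloisField 2 m)
    (hα : ∀ x : GaloisField 2 m, x ^ (2 ^ k + 1) + x + α ≠ 0) :
    IsAPN (fun p : GaloisField 2 m × GaloisField 2 m =>
      (p.1 ^ (2 ^ k + 1) + p.1 * p.2 ^ (2 ^ k) + α * p.2 ^ (2 ^ k + 1),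
       p.1 ^ (2 ^ (2 * k) + 1) + α * p.1 ^ (2 ^ (2 * k)) * p.2
         + (1 + α ^ (2 ^ k)) * p.1 * p.2 ^ (2 ^ (2 * k))
         + α * p.2 ^ (2 ^ (2 * k) + 1))) := by
  apply aux_apn
  intro A hA z z0 heq
  obtain ⟨a, b⟩ := A
  have h2 : (2 : GaloisField 2 m) = 0 := CharTwo.two_eq_zero
  have hab : ¬(a = 0 ∧ b = 0) := by
    rintro ⟨h1', h2'⟩
    exact hA (by simp [h1', h2', Prod.ext_iff])
  have hconv : ∀ u : GaloisField 2 m, u ^ 2 ^ (2 * k) = (u ^ 2 ^ k) ^ 2 ^ k := by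
    intro u
    rw [two_mul, pow_add, pow_mul]
  have h1 := congrArg Prod.fst heq
  have h2c := congrArg Prod.snd heq
  simp only [Prod.fst_add, Prod.snd_add, Prod.mk_add_mk, pow_succ, hconv,
    add_pow_char_pow, mul_pow] at h1 h2c
  have hker := aux_ker m k hm hk h α hα a b (z.1 + z0.1) (z.2 + z0.2) hab ?_ ?_
  · rcases hker with ⟨hx, hy⟩ | ⟨hx, hy⟩
    · left
      have e1' : z.1 = z0.1 := by linear_combination hx - z0.1 * h2
      have e2' : z.2 = z0.2 := by linear_combination hy - z0.2 * h2
      exact Prod.ext e1' e2'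
    · right
      have e1' : z.1 = z0.1 + a := by linear_combination hx - z0.1 * h2
      have e2' : z.2 = z0.2 + b := by linear_combination hy - z0.2 * h2
      exact Prod.ext (by simpa using e1') (by simpa using e2')
  · simp only [add_pow_char_pow]
    linear_combination h1 + (a*(z0.1 ^ 2 ^ k) + a*(z0.2 ^ 2 ^ k) + (a ^ 2 ^ k)*z0.1 + b*(z0.2 ^ 2 ^ k)*α + (b ^ 2 ^ k)*z0.1 + (b ^ 2 ^ k)*z0.2*α + z0.1*(z0.1 ^ 2 ^ k) + z0.1*(z0.2 ^ 2 ^ k) + z0.2*(z0.2 ^ 2 ^ k)*α - α*z.2*(z.2 ^ 2 ^ k) - z.1*(z.1 ^ 2 ^ k) - z.1*(z.2 ^ 2 ^ k)) * h2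
  · simp only [add_pow_char_pow]
    linear_combination h2c + (a*((z0.1 ^ 2 ^ k) ^ 2 ^ k) + a*((z0.2 ^ 2 ^ k) ^ 2 ^ k) + a*((z0.2 ^ 2 ^ k) ^ 2 ^ k)*(α ^ 2 ^ k) + ((a ^ 2 ^ k) ^ 2 ^ k)*z0.1 + ((a ^ 2 ^ k) ^ 2 ^ k)*z0.2*α + b*((z0.1 ^ 2 ^ k) ^ 2 ^ k)*α + b*((z0.2 ^ 2 ^ k) ^ 2 ^ k)*α + ((b ^ 2 ^ k) ^ 2 ^ k)*z0.1 + ((b ^ 2 ^ k) ^ 2 ^ k)*z0.1*(α ^ 2 ^ k) + ((b ^ 2 ^ k) ^ 2 ^ k)*z0.2*α + z0.1*((z0.1 ^ 2 ^ k) ^ 2 ^ k) + z0.1*((z0.2 ^ 2 ^ k) ^ 2 ^ k) + z0.1*((z0.2 ^ 2 ^ k) ^ 2 ^ k)*(α ^ 2 ^ k) + ((z0.1 ^ 2 ^ k) ^ 2 ^ k)*z0.2*α + z0.2*((z0.2 ^ 2 ^ k) ^ 2 ^ k)*α - α*((z.1 ^ 2 ^ k) ^ 2 ^ k)*z.2 -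 α*z.2*((z.2 ^ 2 ^ k) ^ 2 ^ k) - (α ^ 2 ^ k)*z.1*((z.2 ^ 2 ^ k) ^ 2 ^ k) - z.1*((z.1 ^ 2 ^ k) ^ 2 ^ k) - z.1*((z.2 ^ 2 ^ k) ^ 2 ^ k)) * h2
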